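/- Let R be a Cohen–Macaulay semi-standard graded ring of dimension d admitting a degree-0 injection φ : R → ω_R(−a) with cokernel C, where a = a(R), and let (h_0, …, h_s) be the h-vector of R. Then the Hilbert series of C equals (Σ_{j=0}^{s−1} ((h_s + ⋯ + h_{s−j}) − (h_0 + ⋯ + h_j)) t^j) / (1−t)^{d−1}. In particular, e(C) = Σ_{j=0}^{s−1} ((h_s + ⋯ + h_{s−j}) − (h_0 + ⋯ + h_j)). -/

import Mathlib

noncomputable section

open Finset PowerSeries

/-- `e` is the multiplicity of a graded object of dimension `dm` with Hilbert function
`H`: the Hilbert series `∑ H(i) t^i` equals a polynomial numerator over `(1−t)^dm`,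
and `e` is the sum of the numerator coefficients. -/
def IsMultOf (H : ℕ → ℤ) (dm : ℕ) (e : ℤ) : Prop :=
  ∃ P : Polynomial ℤ,
    (PowerSeries.mk H) * (1 - PowerSeries.X) ^ dm = (P : PowerSeries ℤ) ∧ P.eval 1 = e

private lemma partialSum_mul (g : ℕ → ℤ) (s : ℕ) :
    (1 - PowerSeries.X) *
      ∑ j ∈ Finset.range s, PowerSeries.C (R := ℤ) (∑ i ∈ Finset.range (j+1), g i) * PowerSeries.X ^ j
    = ∑ j ∈ Finset.range (s+1), PowerSeries.C (R := ℤ) (g j) * PowerSeries.X ^ j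
      - PowerSeries.C (R := ℤ) (∑ i ∈ Finset.range (s+1), g i) * PowerSeries.X ^ s := by
  induction s with
  | zero => simp
  | succ n ih =>
    simp only [Finset.sum_range_succ, map_add] at ih ⊢
    linear_combination ih

private lemma coeff_sum_CX (g : ℕ → ℤ) (m i : ℕ) :
    (PowerSeries.coeff (R := ℤ) i) (∑ j ∈ Finset.range m, PowerSeries.C (R := ℤ) (g j) * PowerSeries.X ^ j)
    = if i ∈ Finset.range m then g i else 0 := by
  rw [map_sum]
  simp only [PowerSeries.coeff_C_mul, PowerSeries.coeff_X_pow, mul_ite, mul_one, mul_zero]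
  rw [Finset.sum_ite_eq (Finset.range m) i g]

private lemma coe_sum_CX (f : ℕ → ℤ) (m : ℕ) :
    ((∑ j ∈ Finset.range m, Polynomial.C (f j) * Polynomial.X ^ j : Polynomial ℤ) : PowerSeries ℤ)
    = ∑ j ∈ Finset.range m, PowerSeries.C (R := ℤ) (f j) * PowerSeries.X ^ j := by
  rw [show ((∑ j ∈ Finset.range m, Polynomial.C (f j) * Polynomial.X ^ j : Polynomial ℤ) : PowerSeries ℤ)
    = Polynomial.coeToPowerSeries.ringHom
        (∑ j ∈ Finset.range m, Polynomial.C (f j) * Polynomial.X ^ j) from rfl, map_sum]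
  refine Finset.sum_congr rfl fun j _ => ?_
  show ((Polynomial.C (f j) * Polynomial.X ^ j : Polynomial ℤ) : PowerSeries ℤ) = _
  rw [Polynomial.coe_mul, Polynomial.coe_pow, Polynomial.coe_C, Polynomial.coe_X]

/-- Theorem 4.5(2): for a Cohen–Macaulay semi-standard graded ring `R` of dimension `d`
with `h`-vector `(h 0, …, h s)`, canonical module `Ω` and a degree-0 injection
`φ : R → ω_R(−a)` with cokernel `C`, the Hilbert series of `C` is
`(∑_{j=0}^{s−1} ((h s + ⋯ + h (s−j)) − (h 0 + ⋯ + h j)) t^j) / (1−t)^{d−1}`; in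
particular `e(C) = ∑_{j=0}^{s−1} ((h s + ⋯ + h (s−j)) − (h 0 + ⋯ + h j))`. -/
theorem hilbert_series_coker
(k : Type*) [Field k] (R : Type*) [CommRing R] [Algebra k R]
    (𝒜 : ℕ → Submodule k R) [GradedAlgebra 𝒜]
    (hfd : ∀ i, FiniteDimensional k (𝒜 i))
    (hnoeth : IsNoetherianRing R)
    -- semi-standard graded: `R` is a finite module over `k[R₁]`
    (hss : Module.Finite (Algebra.adjoin k ((𝒜 1 : Submodule k R) : Set R)) R)
    (d s : ℕ) (h : ℕ → ℤ) (hhs : h s ≠ 0)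
    (hdim : ringKrullDim R = d)
    -- the `h`-vector: Hilbert series of `R` is `(∑ h j t^j) / (1−t)^d`
    (hHS : (PowerSeries.mk fun i => (Module.finrank k (𝒜 i) : ℤ)) * (1 - PowerSeries.X) ^ d
      = ∑ j ∈ Finset.range (s + 1), PowerSeries.C (R := ℤ) (h j) * PowerSeries.X ^ j)
    -- `R` is Cohen–Macaulay: a regular sequence of length `d` in the graded maximal ideal
    (hCM : ∃ rs : List R, RingTheory.Sequence.IsRegular R rs ∧
      (∀ r ∈ rs, r ∈ (HomogeneousIdeal.irrelevant 𝒜).toIdeal) ∧ rs.length = d)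
    -- the canonical module `Ω = ω_R`, a finitely generated graded `R`-module with
    -- `a(R) = a` and Hilbert series `(∑ h (s−j) t^{j−a}) / (1−t)^d`
    (Ω : Type*) [AddCommGroup Ω] [Module R Ω] [Module k Ω] [IsScalarTower k R Ω]
    (ℳ : ℤ → Submodule k Ω) [DirectSum.Decomposition ℳ]
    (hsmul : ∀ (i : ℕ) (j : ℤ), ∀ r ∈ 𝒜 i, ∀ x ∈ ℳ j, r • x ∈ ℳ (i + j))
    (hΩfg : Module.Finite R Ω)
    (a : ℤ) (hbot : ∀ n : ℤ, n < -a → ℳ n = ⊥) (hne : ℳ (-a) ≠ ⊥)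
    (hΩfd : ∀ n : ℤ, FiniteDimensional k (ℳ n))
    (hΩHS : (PowerSeries.mk fun i : ℕ => (Module.finrank k (ℳ ((i : ℤ) - a)) : ℤ))
        * (1 - PowerSeries.X) ^ d
      = ∑ j ∈ Finset.range (s + 1), PowerSeries.C (R := ℤ) (h (s - j)) * PowerSeries.X ^ j)    -- condition (4.2): a degree-0 injection `φ : R → ω_R(−a)`
    (φ : R →ₗ[R] Ω) (hφinj : Function.Injective φ)
    (hφdeg : ∀ (n : ℕ), ∀ x ∈ 𝒜 n, φ x ∈ ℳ ((n : ℤ) - a)) :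
    ((PowerSeries.mk fun i : ℕ =>
        (Module.finrank k (ℳ ((i : ℤ) - a)) : ℤ) - (Module.finrank k (𝒜 i) : ℤ))
      * (1 - PowerSeries.X) ^ (d - 1)
      = ∑ j ∈ Finset.range s,
          PowerSeries.C (R := ℤ) (∑ i ∈ Finset.range (j + 1), (h (s - i) - h i))
            * PowerSeries.X ^ j) ∧
    IsMultOf
      (fun i : ℕ =>
        (Module.finrank k (ℳ ((i : ℤ) - a)) : ℤ) - (Module.finrank k (𝒜 i) : ℤ))
      (d - 1)
      (∑ j ∈ Finset.range s, ∑ i ∈ Finset.range (j + 1), (h (s - i) - h i)) := by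
  set f : ℕ → ℤ := fun i : ℕ =>
    (Module.finrank k (ℳ ((i : ℤ) - a)) : ℤ) - (Module.finrank k (𝒜 i) : ℤ) with hf
  set g : ℕ → ℤ := fun j => h (s - j) - h j with hg
  -- the subtracted Hilbert series identity
  have hF : (PowerSeries.mk f) * (1 - PowerSeries.X) ^ d
      = ∑ j ∈ range (s + 1), PowerSeries.C (R := ℤ) (g j) * PowerSeries.X ^ j := by
    have hsplit : (PowerSeries.mk f)
        = (PowerSeries.mk fun i : ℕ => (Module.finrank k (ℳ ((i : ℤ) - a)) : ℤ))
          - (PowerSeries.mk fun i => (Module.finrank k (𝒜 i) : ℤ)) := by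
      ext n; simp [hf]
    rw [hsplit, sub_mul, hΩHS, hHS, ← Finset.sum_sub_distrib]
    refine Finset.sum_congr rfl fun j _ => ?_
    rw [hg]
    rw [map_sub]
    ring
  -- total sum of g vanishes
  have htot : ∑ j ∈ range (s + 1), g j = 0 := by
    have hrefl := Finset.sum_range_reflect h (s + 1)
    simp only [hg, Finset.sum_sub_distrib]
    simp only [Nat.add_sub_cancel] at hrefl
    rw [hrefl, sub_self]
  have hkey := partialSum_mul g s
  rw [htot, map_zero, zero_mul, sub_zero] at hkey
  -- pointwise nonnegativity of f
  have hmono : ∀ i : ℕ, 0 ≤ f i := by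
    intro i
    haveI := hfd i
    haveI := hΩfd ((i : ℤ) - a)
    let ψ : (𝒜 i) →ₗ[k] (ℳ ((i : ℤ) - a)) :=
      { toFun := fun x => ⟨φ x, hφdeg i x x.2⟩
        map_add' := by intro x y; ext; simp
        map_smul' := by intro c x; ext; simp }
    have hinj : Function.Injective ψ := by
      intro x y hxy
      exact Subtype.ext (hφinj (congrArg Subtype.val hxy))
    have := LinearMap.finrank_le_finrank_of_injective hinj
    simp only [hf, sub_nonneg]
    exact_mod_cast this
  have hmain : (PowerSeries.mk f) * (1 - PowerSeries.X) ^ (d - 1)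
      = ∑ j ∈ range s,
          PowerSeries.C (R := ℤ) (∑ i ∈ range (j + 1), g i) * PowerSeries.X ^ j := by
    cases d with
    | zero =>
      rw [pow_zero, mul_one] at hF
      have hgz : ∀ j ∈ range (s + 1), g j = 0 := by
        refine (Finset.sum_eq_zero_iff_of_nonneg ?_).mp htot
        intro j hj
        have hc := congrArg (PowerSeries.coeff (R := ℤ) j) hF
        rw [PowerSeries.coeff_mk, coeff_sum_CX g (s + 1) j, if_pos hj] at hc
        rw [← hc]
        exact hmono j
      have hP0 : (∑ j ∈ range s,
          PowerSeries.C (R := ℤ) (∑ i ∈ range (j + 1), g i) * PowerSeries.X ^ j) = 0 := by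
        refine Finset.sum_eq_zero fun j hj => ?_
        have : (∑ i ∈ range (j + 1), g i) = 0 := by
          refine Finset.sum_eq_zero fun i hi => ?_
          refine hgz i (Finset.mem_range.mpr ?_)
          exact lt_of_lt_of_le (Finset.mem_range.mp hi)
            (Nat.succ_le_succ (Nat.le_of_lt_succ (Nat.lt_succ_of_lt (Finset.mem_range.mp hj))))
        rw [this, map_zero, zero_mul]
      have hQ0 : (∑ j ∈ range (s + 1), PowerSeries.C (R := ℤ) (g j) * PowerSeries.X ^ j) = 0 := by
        refine Finset.sum_eq_zero fun j hj => ?_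
        rw [hgz j hj, map_zero, zero_mul]
      rw [Nat.zero_sub, pow_zero, mul_one, hF, hQ0, hP0]
    | succ e =>
      have h1 : ((1 : PowerSeries ℤ) - PowerSeries.X) ≠ 0 := by
        intro hc
        have := congrArg (PowerSeries.constantCoeff (R := ℤ)) hc
        simp at this
      rw [Nat.succ_sub_one]
      apply mul_right_cancel₀ h1
      calc (PowerSeries.mk f) * (1 - PowerSeries.X) ^ e * (1 - PowerSeries.X)
          = (PowerSeries.mk f) * (1 - PowerSeries.X) ^ (e + 1) := by ring
        _ = ∑ j ∈ range (s + 1), PowerSeries.C (R := ℤ) (g j) * PowerSeries.X ^ j := hF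
        _ = (1 - PowerSeries.X) *
              ∑ j ∈ range s, PowerSeries.C (R := ℤ) (∑ i ∈ range (j + 1), g i)
                * PowerSeries.X ^ j := hkey.symm
        _ = _ := by ring
  refine ⟨hmain, ?_⟩
  refine ⟨∑ j ∈ range s, Polynomial.C (∑ i ∈ range (j + 1), g i) * Polynomial.X ^ j, ?_, ?_⟩
  · rw [coe_sum_CX]
    exact hmain
  · simp [Polynomial.eval_finset_sum]
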